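/- Let k : ℝᵈ × ℝᵈ → ℝ be a symmetric positive-semidefinite kernel that is Lipschitz continuous (with respect to the Euclidean norm on ℝᵈ × ℝᵈ) with constant L_k ≥ 0 and satisfies 0 ≤ k(x,y) ≤ k_max for all x, y ∈ ℝᵈ, where k_max > 0. Fix a noise level σ_w > 0, data points X = (x₁,…,x_t) ∈ (ℝᵈ)ᵗ, and reference points r₁,…,r_N ∈ ℝᵈ; write R_i := (r₁,…,r_i) for 0 ≤ i ≤ N. For points ξ, x ∈ ℝᵈ, define the mutual-information difference ΔI(ξ, x) := Σ_{i=0}^{N−1} ½·[ log(σ_w² + σ²_{X ⌢ R_i ⌢ (x)}(r_{i+1})) − log(σ_w² + σ²_{X ⌢ R_i ⌢ (ξ)}(r_{i+1})) ], where σ²_S(z) denotes the GP posterior variance at z given the data tuple S with noise variance σ_w², and ⌢ denotes concatenation of tuples. Then there exists a constant L ≥ 0, depending only on L_k, k_max, σ_w, d, t and N, such that for all ξ, x ∈ ℝᵈ: ΔI(ξ, x) ≤ (N/2)·log(1 + min{k_max, L·‖ξ − x‖₂}/σ_w²). -/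

import Mathlib

open Matrix

/-- The kernel matrix `[k(p i, p j)]_{i,j}` of a tuple of points. -/
noncomputable def kerMat {α : Type*} {m : ℕ} (k : α → α → ℝ) (p : Fin m → α) :
    Matrix (Fin m) (Fin m) ℝ :=
  Matrix.of fun i j => k (p i) (p j)

/-- The GP posterior variance at a test point `z` given the data tuple `p` and
noise variance `σ²`:
`σ²_p(z) = k(z,z) − k_p(z)ᵀ (K_p + σ² I)⁻¹ k_p(z)`. -/
noncomputable def postVar {α : Type*} {m : ℕ} (k : α → α → ℝ) (σ : ℝ) (p : Fin m → α)
    (z : α) : ℝ :=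
  k z z - (fun i => k (p i) z) ⬝ᵥ
    ((kerMat k p + σ ^ 2 • (1 : Matrix (Fin m) (Fin m) ℝ))⁻¹ *ᵥ fun i => k (p i) z)

lemma aux_posdef {n : ℕ} {K : Matrix (Fin n) (Fin n) ℝ} (hK : K.PosSemidef) {σ : ℝ} (hσ : 0 < σ) :
    (K + σ ^ 2 • (1 : Matrix (Fin n) (Fin n) ℝ)).PosDef := by
  rw [Matrix.smul_one_eq_diagonal]
  exact Matrix.PosDef.posSemidef_add hK (Matrix.posDef_diagonal_iff.mpr fun _ => pow_pos hσ 2)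

lemma aux_mulVec_inv {n : ℕ} {M : Matrix (Fin n) (Fin n) ℝ} (hM : M.PosDef) (v : Fin n → ℝ) :
    M *ᵥ (M⁻¹ *ᵥ v) = v := by
  rw [Matrix.mulVec_mulVec, Matrix.mul_nonsing_inv _ hM.det_pos.ne'.isUnit, Matrix.one_mulVec]

lemma aux_inv_mulVec {n : ℕ} {M : Matrix (Fin n) (Fin n) ℝ} (hM : M.PosDef) (v : Fin n → ℝ) :
    M⁻¹ *ᵥ (M *ᵥ v) = v := by
  rw [Matrix.mulVec_mulVec, Matrix.nonsing_inv_mul _ hM.det_pos.ne'.isUnit, Matrix.one_mulVec]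

lemma aux_inv_entry {n : ℕ} {K : Matrix (Fin n) (Fin n) ℝ} (hK : K.PosSemidef) {σ : ℝ}
    (hσ : 0 < σ) (i j : Fin n) :
    |(K + σ ^ 2 • (1 : Matrix (Fin n) (Fin n) ℝ))⁻¹ i j| ≤ (σ ^ 2)⁻¹ := by
  set M := K + σ ^ 2 • (1 : Matrix (Fin n) (Fin n) ℝ) with hMdef
  have hM : M.PosDef := aux_posdef hK hσ
  set u : Fin n → ℝ := M⁻¹ *ᵥ Pi.single j 1 with hu
  have hui : ∀ l, u l = M⁻¹ l j := by
    intro l; simp [hu]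
  have hMu : M *ᵥ u = Pi.single j 1 := aux_mulVec_inv hM _
  set s : ℝ := u ⬝ᵥ u with hs
  have hs0 : 0 ≤ s := by
    simpa [hs, dotProduct] using
      Finset.sum_nonneg fun l _ => mul_self_nonneg (u l)
  have h1 : σ ^ 2 * s ≤ u j := by
    have hq : u ⬝ᵥ (M *ᵥ u) = u ⬝ᵥ (K *ᵥ u) + σ ^ 2 * s := by
      rw [hMdef, Matrix.add_mulVec, dotProduct_add, Matrix.smul_mulVec,
        Matrix.one_mulVec, dotProduct_smul]
      rfl
    have hK0 : 0 ≤ u ⬝ᵥ (K *ᵥ u) := by simpa using hK.dotProduct_mulVec_nonneg u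
    have : u ⬝ᵥ (M *ᵥ u) = u j := by
      rw [hMu]
      simp [dotProduct, Pi.single_apply, mul_ite, mul_one, mul_zero,
        Finset.sum_ite_eq']
    linarith [hq, hK0, this.symm ▸ hq]
  have h2 : (u j) ^ 2 ≤ s := by
    have : (u j) * (u j) ≤ ∑ l, u l * u l :=
      Finset.single_le_sum (f := fun l => u l * u l) (fun l _ => mul_self_nonneg _)
        (Finset.mem_univ j)
    simpa [hs, dotProduct, pow_two] using this
  have h3 : (u i) ^ 2 ≤ s := by
    have : (u i) * (u i) ≤ ∑ l, u l * u l :=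
      Finset.single_le_sum (f := fun l => u l * u l) (fun l _ => mul_self_nonneg _)
        (Finset.mem_univ i)
    simpa [hs, dotProduct, pow_two] using this
  have hσ2 : (0:ℝ) < σ ^ 2 := pow_pos hσ 2
  have hs4 : σ ^ 2 * σ ^ 2 * (s * s) ≤ s := by
    nlinarith [mul_self_le_mul_self (mul_nonneg hσ2.le hs0) h1, h2]
  have hsle : s ≤ ((σ ^ 2)⁻¹) ^ 2 := by
    rcases eq_or_lt_of_le hs0 with h | h
    · rw [← h]; positivity
    · have hinv : (σ ^ 2)⁻¹ * σ ^ 2 = 1 := inv_mul_cancel₀ hσ2.ne'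
      nlinarith [mul_pos (mul_pos hσ2 hσ2) h, sq_nonneg ((σ^2)⁻¹ - s * σ ^ 2)]
  have : (u i) ^ 2 ≤ ((σ ^ 2)⁻¹) ^ 2 := le_trans h3 hsle
  have habs : |u i| ≤ (σ ^ 2)⁻¹ := by
    have h4 : |u i| ^ 2 ≤ ((σ ^ 2)⁻¹) ^ 2 := by rwa [sq_abs]
    nlinarith [abs_nonneg (u i), inv_nonneg.mpr hσ2.le]
  rwa [hui i] at habs

lemma aux_dot_abs_le {n : ℕ} {v w : Fin n → ℝ} {a b : ℝ}
    (ha : ∀ i, |v i| ≤ a) (hb : ∀ i, |w i| ≤ b) : |v ⬝ᵥ w| ≤ n * a * b := by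
  cases n with
  | zero => simp [dotProduct]
  | succ m =>
  have h0a : 0 ≤ a := le_trans (abs_nonneg _) (ha 0)
  calc |v ⬝ᵥ w| ≤ ∑ i, |v i * w i| := Finset.abs_sum_le_sum_abs _ _
    _ ≤ ∑ _i : Fin (m + 1), a * b := by
        refine Finset.sum_le_sum fun i _ => ?_
        rw [abs_mul]
        exact mul_le_mul (ha i) (hb i) (abs_nonneg _) h0a
    _ = ((m + 1 : ℕ) : ℝ) * (a * b) := by simp [Finset.sum_const, nsmul_eq_mul]
    _ = ((m + 1 : ℕ) : ℝ) * a * b := by ring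

lemma aux_mulVec_entry_le {n : ℕ} {A : Matrix (Fin n) (Fin n) ℝ} {v : Fin n → ℝ} {a b : ℝ}
    (hA : ∀ i j, |A i j| ≤ a) (hv : ∀ i, |v i| ≤ b) (i : Fin n) : |(A *ᵥ v) i| ≤ n * a * b :=
  aux_dot_abs_le (hA i) hv

lemma postVar_le {α : Type*} {n : ℕ} (k : α → α → ℝ)
    (hpsd : ∀ (m : ℕ) (p : Fin m → α), (kerMat k p).PosSemidef)
    {σ : ℝ} (hσ : 0 < σ) (p : Fin n → α) (z : α) : postVar k σ p z ≤ k z z := by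
  have hM : (kerMat k p + σ ^ 2 • (1 : Matrix (Fin n) (Fin n) ℝ)).PosDef :=
    aux_posdef (hpsd n p) hσ
  have h := hM.inv.posSemidef.dotProduct_mulVec_nonneg (fun i => k (p i) z)
  rw [star_trivial] at h
  unfold postVar
  linarith

lemma postVar_nonneg {α : Type*} {n : ℕ} (k : α → α → ℝ)
    (hsymm : ∀ x y, k x y = k y x)
    (hpsd : ∀ (m : ℕ) (p : Fin m → α), (kerMat k p).PosSemidef)
    {σ : ℝ} (hσ : 0 < σ) (p : Fin n → α) (z : α) : 0 ≤ postVar k σ p z := by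
  set K := kerMat k p with hKdef
  set M := K + σ ^ 2 • (1 : Matrix (Fin n) (Fin n) ℝ) with hMdef
  have hM : M.PosDef := aux_posdef (hpsd n p) hσ
  set b : Fin n → ℝ := fun i => k (p i) z with hb
  set u : Fin n → ℝ := M⁻¹ *ᵥ b with hu
  have hMu : M *ᵥ u = b := aux_mulVec_inv hM b
  have key : 0 ≤ (u ⬝ᵥ (K *ᵥ u)) - 2 * (u ⬝ᵥ b) + k z z := by
    have h := (hpsd (n + 1) (Fin.snoc p z)).dotProduct_mulVec_nonneg (Fin.snoc u (-1))
    rw [star_trivial] at h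
    have expand : (Fin.snoc u (-1) : Fin (n+1) → ℝ) ⬝ᵥ
        (kerMat k (Fin.snoc p z) *ᵥ Fin.snoc u (-1)) =
        (u ⬝ᵥ (K *ᵥ u)) - 2 * (u ⬝ᵥ b) + k z z := by
      simp only [dotProduct, Matrix.mulVec, kerMat, Matrix.of_apply,
        Fin.sum_univ_castSucc, Fin.snoc_castSucc, Fin.snoc_last, hb]
      have hzb : ∀ j, k z (p j) = k (p j) z := fun j => hsymm z (p j)
      simp only [hzb, hKdef, kerMat, Matrix.of_apply, mul_neg, mul_one, neg_mul, one_mul,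
        neg_neg, mul_add, Finset.sum_add_distrib, neg_add, Finset.sum_neg_distrib, two_mul,
        add_mul, sub_eq_add_neg]
      ring_nf
      rw [Finset.sum_congr rfl fun i _ => mul_comm (k (p i) z) (u i)]
      ring
    rw [expand] at h
    exact h
  have e1 : b ⬝ᵥ u = u ⬝ᵥ (K *ᵥ u) + σ ^ 2 * (u ⬝ᵥ u) := by
    rw [← hMu]
    rw [dotProduct_comm]
    rw [hMdef, Matrix.add_mulVec, dotProduct_add, Matrix.smul_mulVec,
      Matrix.one_mulVec, dotProduct_smul]
    rfl
  have e2 : 0 ≤ u ⬝ᵥ u := Finset.sum_nonneg fun l _ => mul_self_nonneg (u l)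
  have e3 : u ⬝ᵥ b = b ⬝ᵥ u := dotProduct_comm u b
  have hσ2 : (0:ℝ) < σ ^ 2 := pow_pos hσ 2
  unfold postVar
  rw [← hb, ← hKdef, ← hMdef, ← hu]
  nlinarith [mul_nonneg hσ2.le e2]

lemma aux_quad_diff {n : ℕ} {K K' : Matrix (Fin n) (Fin n) ℝ}
    (hK : K.PosSemidef) (hK' : K'.PosSemidef)
    {σ kmax ε : ℝ} (hσ : 0 < σ) (hkmax : 0 ≤ kmax) (hε : 0 ≤ ε)
    {b b' : Fin n → ℝ}
    (hb : ∀ i, |b i| ≤ kmax) (hb' : ∀ i, |b' i| ≤ kmax)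
    (hbe : ∀ i, |b i - b' i| ≤ ε) (hKe : ∀ i j, |K i j - K' i j| ≤ ε) :
    b ⬝ᵥ ((K + σ ^ 2 • (1 : Matrix (Fin n) (Fin n) ℝ))⁻¹ *ᵥ b) -
      b' ⬝ᵥ ((K' + σ ^ 2 • (1 : Matrix (Fin n) (Fin n) ℝ))⁻¹ *ᵥ b')
      ≤ (n ^ 2 * (σ ^ 2)⁻¹ * kmax * (2 + n ^ 2 * (σ ^ 2)⁻¹ * kmax)) * ε := by
  set M := K + σ ^ 2 • (1 : Matrix (Fin n) (Fin n) ℝ) with hMdef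
  set M' := K' + σ ^ 2 • (1 : Matrix (Fin n) (Fin n) ℝ) with hM'def
  have hM : M.PosDef := aux_posdef hK hσ
  have hM' : M'.PosDef := aux_posdef hK' hσ
  set u : Fin n → ℝ := M⁻¹ *ᵥ b with hu
  set u' : Fin n → ℝ := M'⁻¹ *ᵥ b' with hu'
  have hMu : M *ᵥ u = b := aux_mulVec_inv hM b
  have hM'u : M' *ᵥ u' = b' := aux_mulVec_inv hM' b'
  have hσ2 : (0:ℝ) < σ ^ 2 := pow_pos hσ 2
  set ub : ℝ := n * (σ ^ 2)⁻¹ * kmax with hub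
  have hub0 : 0 ≤ ub := by positivity
  have huB : ∀ i, |u i| ≤ ub := fun i =>
    aux_mulVec_entry_le (fun i j => aux_inv_entry hK hσ i j) hb i
  have hu'B : ∀ i, |u' i| ≤ ub := fun i =>
    aux_mulVec_entry_le (fun i j => aux_inv_entry hK' hσ i j) hb' i
  set w : Fin n → ℝ := (b - b') + (M' - M) *ᵥ u' with hw
  have hMMe : ∀ i j, |(M' - M) i j| ≤ ε := by
    intro i j
    have : (M' - M) i j = K' i j - K i j := by
      simp [hMdef, hM'def, Matrix.sub_apply, Matrix.add_apply]
    rw [this, ← abs_neg]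
    simpa using hKe i j
  have hwB : ∀ i, |w i| ≤ ε + n * ε * ub := by
    intro i
    have h1 : |(b - b') i| ≤ ε := hbe i
    have h2 : |((M' - M) *ᵥ u') i| ≤ n * ε * ub := aux_mulVec_entry_le hMMe hu'B i
    calc |w i| = |(b - b') i + ((M' - M) *ᵥ u') i| := rfl
      _ ≤ |(b - b') i| + |((M' - M) *ᵥ u') i| := abs_add_le _ _
      _ ≤ ε + n * ε * ub := add_le_add h1 h2
  have hid : u - u' = M⁻¹ *ᵥ w := by
    have hMid : M *ᵥ (u - u') = w := by
      rw [Matrix.mulVec_sub, hMu]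
      have hMM : M' + (M - M') = M := by abel
      have h3 : M *ᵥ u' = b' + (M - M') *ᵥ u' := by
        conv_lhs => rw [← hMM]
        rw [Matrix.add_mulVec, hM'u]
      rw [h3, hw]
      have h4 : (M - M') *ᵥ u' = -((M' - M) *ᵥ u') := by
        rw [← Matrix.neg_mulVec, neg_sub]
      rw [h4]
      abel
    rw [← hMid, aux_inv_mulVec hM]
  have hsplit : b ⬝ᵥ u - b' ⬝ᵥ u' = (b - b') ⬝ᵥ u + b' ⬝ᵥ (M⁻¹ *ᵥ w) := by
    rw [← hid, sub_dotProduct, dotProduct_sub]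
    ring
  rw [hsplit]
  have hB1 : |(b - b') ⬝ᵥ u| ≤ n * ε * ub := aux_dot_abs_le hbe huB
  have hMw : ∀ i, |(M⁻¹ *ᵥ w) i| ≤ n * (σ ^ 2)⁻¹ * (ε + n * ε * ub) :=
    aux_mulVec_entry_le (fun i j => aux_inv_entry hK hσ i j) hwB
  have hB2 : |b' ⬝ᵥ (M⁻¹ *ᵥ w)| ≤ n * kmax * (n * (σ ^ 2)⁻¹ * (ε + n * ε * ub)) :=
    aux_dot_abs_le hb' hMw
  have h1 := le_of_abs_le hB1
  have h2 := le_of_abs_le hB2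
  have heq : ↑n * ε * ub + ↑n * kmax * (↑n * (σ ^ 2)⁻¹ * (ε + ↑n * ε * ub)) =
      (n ^ 2 * (σ ^ 2)⁻¹ * kmax * (2 + n ^ 2 * (σ ^ 2)⁻¹ * kmax)) * ε := by
    rw [hub]; ring
  linarith [h1, h2]

/-- **Theorem 1 of the paper.** Let `k` be a symmetric PSD kernel
on `ℝᵈ` (with the Euclidean norm), Lipschitz with constant `L_k` with respect to
the Euclidean norm on `ℝᵈ × ℝᵈ`, and with values in `[0, k_max]`. Then there is
a constant `L ≥ 0`, depending only on `L_k, k_max, σ_w, d, t, N`, such that for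
all data points `X = (x₁,…,x_t)`, reference points `r₁,…,r_N`, and points
`ξ, x`, the mutual-information difference
`ΔI(ξ, x) = Σ_{i=0}^{N−1} ½ [log(σ_w² + σ²_{X⌢R_i⌢(x)}(r_{i+1})) −
log(σ_w² + σ²_{X⌢R_i⌢(ξ)}(r_{i+1}))]`
satisfies `ΔI(ξ, x) ≤ (N/2)·log(1 + min{k_max, L‖ξ − x‖₂}/σ_w²)`. -/
theorem mutual_information_difference_bound (d : ℕ)
    (k : EuclideanSpace ℝ (Fin d) → EuclideanSpace ℝ (Fin d) → ℝ)
    (hsymm : ∀ x y, k x y = k y x)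
    (hpsd : ∀ (m : ℕ) (p : Fin m → EuclideanSpace ℝ (Fin d)), (kerMat k p).PosSemidef)
    (Lk : ℝ) (hLk : 0 ≤ Lk)
    (hlip : ∀ x y x' y' : EuclideanSpace ℝ (Fin d),
      |k x y - k x' y'| ≤ Lk * Real.sqrt (‖x - x'‖ ^ 2 + ‖y - y'‖ ^ 2))
    (kmax : ℝ) (hkmax : 0 < kmax)
    (hkbound : ∀ x y, 0 ≤ k x y ∧ k x y ≤ kmax)
    (σw : ℝ) (hσw : 0 < σw) (t N : ℕ) :
    ∃ L : ℝ, 0 ≤ L ∧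
      ∀ (X : Fin t → EuclideanSpace ℝ (Fin d)) (r : Fin N → EuclideanSpace ℝ (Fin d))
        (ξ x : EuclideanSpace ℝ (Fin d)),
        ∑ i : Fin N, (1 / 2 : ℝ) *
          (Real.log (σw ^ 2 + postVar k σw
              (Fin.append (Fin.append X fun j : Fin i.val => r (Fin.castLE i.isLt.le j))
                fun _ : Fin 1 => x) (r i)) -
           Real.log (σw ^ 2 + postVar k σw
              (Fin.append (Fin.append X fun j : Fin i.val => r (Fin.castLE i.isLt.le j))
                fun _ : Fin 1 => ξ) (r i))) ≤
        (N / 2 : ℝ) * Real.log (1 + min kmax (L * ‖ξ - x‖) / σw ^ 2) := by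
  classical
  have hσ2 : (0:ℝ) < σw ^ 2 := pow_pos hσw 2
  set n1 : ℝ := ((t + N + 1 : ℕ) : ℝ) with hn1
  set Cn : ℝ := n1 ^ 2 * (σw ^ 2)⁻¹ * kmax * (2 + n1 ^ 2 * (σw ^ 2)⁻¹ * kmax) with hCn
  have hn10 : 0 ≤ n1 := Nat.cast_nonneg _
  have hCn0 : 0 ≤ Cn := by positivity
  have hsqrt2 : (0:ℝ) ≤ Real.sqrt 2 := Real.sqrt_nonneg 2
  refine ⟨Cn * (Lk * Real.sqrt 2), by positivity, ?_⟩
  intro X r ξ x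
  set L : ℝ := Cn * (Lk * Real.sqrt 2) with hL
  set μ : ℝ := min kmax (L * ‖ξ - x‖) with hμ
  have hL0 : 0 ≤ L := by positivity
  have hμ0 : 0 ≤ μ := le_min hkmax.le (by positivity)
  have hμk : μ ≤ kmax := min_le_left _ _
  -- kernel Lipschitz bound
  set ε : ℝ := Lk * (Real.sqrt 2 * ‖ξ - x‖) with hε
  have hε0 : 0 ≤ ε := by positivity
  have hkdiff : ∀ a c a' c' : EuclideanSpace ℝ (Fin d), ‖a - a'‖ ≤ ‖ξ - x‖ →
      ‖c - c'‖ ≤ ‖ξ - x‖ → |k a c - k a' c'| ≤ ε := by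
    intro a c a' c' h1 h2
    refine le_trans (hlip a c a' c') ?_
    rw [hε]
    refine mul_le_mul_of_nonneg_left ?_ hLk
    have hs : Real.sqrt (‖a - a'‖ ^ 2 + ‖c - c'‖ ^ 2) ≤
        Real.sqrt (2 * ‖ξ - x‖ ^ 2) := by
      apply Real.sqrt_le_sqrt
      have e1 : ‖a - a'‖ ^ 2 ≤ ‖ξ - x‖ ^ 2 := by
        apply pow_le_pow_left₀ (norm_nonneg _) h1
      have e2 : ‖c - c'‖ ^ 2 ≤ ‖ξ - x‖ ^ 2 := by
        apply pow_le_pow_left₀ (norm_nonneg _) h2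
      linarith
    refine le_trans hs ?_
    rw [Real.sqrt_mul (by norm_num : (0:ℝ) ≤ 2), Real.sqrt_sq (norm_nonneg _)]
  -- termwise bound
  have hterm : ∀ i : Fin N,
      (1 / 2 : ℝ) *
          (Real.log (σw ^ 2 + postVar k σw
              (Fin.append (Fin.append X fun j : Fin i.val => r (Fin.castLE i.isLt.le j))
                fun _ : Fin 1 => x) (r i)) -
           Real.log (σw ^ 2 + postVar k σw
              (Fin.append (Fin.append X fun j : Fin i.val => r (Fin.castLE i.isLt.le j))
                fun _ : Fin 1 => ξ) (r i))) ≤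
        (1 / 2 : ℝ) * Real.log (1 + μ / σw ^ 2) := by
    intro i
    set q : Fin (t + i.val) → EuclideanSpace ℝ (Fin d) :=
      Fin.append X fun j : Fin i.val => r (Fin.castLE i.isLt.le j) with hq
    set px : Fin (t + i.val + 1) → EuclideanSpace ℝ (Fin d) :=
      Fin.append q (fun _ : Fin 1 => x) with hpx
    set pξ : Fin (t + i.val + 1) → EuclideanSpace ℝ (Fin d) :=
      Fin.append q (fun _ : Fin 1 => ξ) with hpξ
    set z : EuclideanSpace ℝ (Fin d) := r i with hz
    have hdist : ∀ j, ‖px j - pξ j‖ ≤ ‖ξ - x‖ := by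
      intro j
      refine Fin.addCases (fun j0 => ?_) (fun j1 => ?_) j
      · simp only [hpx, hpξ, Fin.append_left, sub_self, norm_zero]
        exact norm_nonneg _
      · simp only [hpx, hpξ, Fin.append_right]
        rw [norm_sub_rev]
    set vx : ℝ := postVar k σw px z with hvx
    set vξ : ℝ := postVar k σw pξ z with hvξ
    have h0ξ : 0 ≤ vξ := postVar_nonneg k hsymm hpsd hσw pξ z
    have h0x : 0 ≤ vx := postVar_nonneg k hsymm hpsd hσw px z
    have hxk : vx ≤ kmax := le_trans (postVar_le k hpsd hσw px z) (hkbound z z).2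
    -- Lipschitz bound on the variance difference
    have habsk : ∀ (a c : EuclideanSpace ℝ (Fin d)), |k a c| ≤ kmax := by
      intro a c
      rcases hkbound a c with ⟨h1, h2⟩
      rw [abs_of_nonneg h1]; exact h2
    have hdiff : vx - vξ ≤ Cn * ε := by
      have hquad := aux_quad_diff (n := t + i.val + 1)
        (hpsd _ pξ) (hpsd _ px) hσw hkmax.le hε0
        (b := fun j => k (pξ j) z) (b' := fun j => k (px j) z)
        (fun j => habsk _ _) (fun j => habsk _ _)
        (fun j => by
          apply hkdiff
          · rw [norm_sub_rev]; exact hdist j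
          · rw [sub_self, norm_zero]; exact norm_nonneg _)
        (fun j l => by
          apply hkdiff
          · rw [norm_sub_rev]; exact hdist j
          · rw [norm_sub_rev]; exact hdist l)
      have hvdiff : vx - vξ =
          (fun j => k (pξ j) z) ⬝ᵥ
            ((kerMat k pξ + σw ^ 2 • (1 : Matrix (Fin (t + i.val + 1)) (Fin (t + i.val + 1)) ℝ))⁻¹
              *ᵥ fun j => k (pξ j) z) -
          (fun j => k (px j) z) ⬝ᵥ
            ((kerMat k px + σw ^ 2 • (1 : Matrix (Fin (t + i.val + 1)) (Fin (t + i.val + 1)) ℝ))⁻¹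
              *ᵥ fun j => k (px j) z) := by
        rw [hvx, hvξ]; unfold postVar; ring
      rw [hvdiff]
      refine le_trans hquad ?_
      have hm : ((t + i.val + 1 : ℕ) : ℝ) ≤ n1 := by
        rw [hn1]
        exact_mod_cast Nat.add_le_add_right (Nat.add_le_add_left i.isLt.le t) 1
      have hmono : ((t + i.val + 1 : ℕ) : ℝ) ^ 2 * (σw ^ 2)⁻¹ * kmax *
          (2 + ((t + i.val + 1 : ℕ) : ℝ) ^ 2 * (σw ^ 2)⁻¹ * kmax) ≤ Cn := by
        rw [hCn]
        have h0 : (0:ℝ) ≤ ((t + i.val + 1 : ℕ) : ℝ) := Nat.cast_nonneg _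
        gcongr
      push_cast at hmono ⊢
      exact mul_le_mul_of_nonneg_right hmono hε0
    have hCε : Cn * ε = L * ‖ξ - x‖ := by rw [hL, hε]; ring
    have hvμ : vx ≤ vξ + μ := by
      have h1 : vx - vξ ≤ L * ‖ξ - x‖ := by rw [← hCε]; exact hdiff
      have h2 : vx - vξ ≤ kmax := by linarith
      have := le_min h2 h1
      rw [← hμ] at this
      linarith
    -- log manipulation
    have hposξ : (0:ℝ) < σw ^ 2 + vξ := by linarith
    have hposx : (0:ℝ) < σw ^ 2 + vx := by linarith
    have hratio : (0:ℝ) < 1 + μ / σw ^ 2 := by positivity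
    have hmul : σw ^ 2 + vx ≤ (σw ^ 2 + vξ) * (1 + μ / σw ^ 2) := by
      have expand : (σw ^ 2 + vξ) * (1 + μ / σw ^ 2) =
          σw ^ 2 + vξ + μ + vξ * (μ / σw ^ 2) := by
        field_simp; ring
      have hq2 : 0 ≤ vξ * (μ / σw ^ 2) := mul_nonneg h0ξ (div_nonneg hμ0 hσ2.le)
      linarith
    have hlog : Real.log (σw ^ 2 + vx) ≤
        Real.log (σw ^ 2 + vξ) + Real.log (1 + μ / σw ^ 2) := by
      rw [← Real.log_mul hposξ.ne' hratio.ne']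
      exact Real.log_le_log hposx hmul
    linarith
  calc ∑ i : Fin N, (1 / 2 : ℝ) *
          (Real.log (σw ^ 2 + postVar k σw
              (Fin.append (Fin.append X fun j : Fin i.val => r (Fin.castLE i.isLt.le j))
                fun _ : Fin 1 => x) (r i)) -
           Real.log (σw ^ 2 + postVar k σw
              (Fin.append (Fin.append X fun j : Fin i.val => r (Fin.castLE i.isLt.le j))
                fun _ : Fin 1 => ξ) (r i)))
      ≤ ∑ _i : Fin N, (1 / 2 : ℝ) * Real.log (1 + μ / σw ^ 2) :=
        Finset.sum_le_sum fun i _ => hterm i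
    _ = (N / 2 : ℝ) * Real.log (1 + μ / σw ^ 2) := by
        rw [Finset.sum_const]
        simp [nsmul_eq_mul]
        ring
    _ = (N / 2 : ℝ) * Real.log (1 + min kmax (L * ‖ξ - x‖) / σw ^ 2) := by rw [hμ]
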